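/- If dμ is the arcsine distribution dμ(x) = dx/(π√(x(4−x))) on [0,4], then for every real z < 0 the potential U(z) = ∫_0^4 log(x − z) dμ(x) equals 2 log((√(−z) + √(4−z))/2). -/

import Mathlib

section ArcsineAux
open Real MeasureTheory intervalIntegral Metric Set

lemma slit_aux (r : ℝ) (hr : |r| < 1) (w : ℂ) (hw : ‖w‖ ≤ 1) :
    (1 - (r:ℂ) * w) ∈ Complex.slitPlane := by
  rw [sub_eq_add_neg]
  apply Complex.mem_slitPlane_of_norm_lt_one
  rw [norm_neg, norm_mul, Complex.norm_real]
  calc ‖r‖ * ‖w‖ ≤ ‖r‖ * 1 := by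
        exact mul_le_mul_of_nonneg_left hw (norm_nonneg _)
    _ < 1 := by rw [mul_one]; exact hr

lemma cauchy_aux (r : ℝ) (hr : |r| < 1) :
    ∫ θ in (0:ℝ)..(2*π), Complex.log (1 - (r:ℂ) * Complex.exp (θ * Complex.I)) = 0 := by
  set f : ℂ → ℂ := fun w => Complex.log (1 - (r:ℂ) * w) with hf
  have hdc : DiffContOnCl ℂ f (ball 0 1) := by
    constructor
    · intro w hw
      refine DifferentiableAt.differentiableWithinAt ?_
      exact ((differentiableAt_const _).sub ((differentiableAt_const _).mul differentiableAt_id)).clog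
        (slit_aux r hr w (le_of_lt (by simpa using hw)))
    · rw [closure_ball (0:ℂ) one_ne_zero]
      intro w hw
      refine ContinuousAt.continuousWithinAt ?_
      exact ((continuousAt_const.sub (continuousAt_const.mul continuousAt_id)).clog
        (slit_aux r hr w (by simpa using hw)))
  have key := hdc.circleIntegral_sub_inv_smul (w := 0) (mem_ball_self one_pos)
  have hf0 : f 0 = 0 := by simp [hf]
  rw [hf0, smul_zero] at key
  rw [circleIntegral] at key
  simp only [deriv_circleMap, circleMap, Complex.ofReal_one, zero_add, one_mul, sub_zero,
    smul_eq_mul] at key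
  have heq : ∀ θ : ℝ, Complex.exp (θ * Complex.I) * Complex.I *
      ((Complex.exp (θ * Complex.I))⁻¹ * f (Complex.exp (θ * Complex.I)))
      = Complex.I * f (Complex.exp (θ * Complex.I)) := by
    intro θ
    have h0 : Complex.exp (θ * Complex.I) ≠ 0 := Complex.exp_ne_zero _
    field_simp
  rw [intervalIntegral.integral_congr (fun θ _ => heq θ)] at key
  rw [intervalIntegral.integral_const_mul] at key
  simpa using (mul_eq_zero.mp key).resolve_left Complex.I_ne_zero

lemma Mpos (r : ℝ) (hr : |r| < 1) (θ : ℝ) : 0 < 1 - 2*r*Real.cos θ + r^2 := by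
  have h1 : r * Real.cos θ ≤ |r| := by
    calc r * Real.cos θ ≤ |r * Real.cos θ| := le_abs_self _
      _ = |r| * |Real.cos θ| := abs_mul _ _
      _ ≤ |r| * 1 := mul_le_mul_of_nonneg_left (abs_cos_le_one θ) (abs_nonneg r)
      _ = |r| := mul_one _
  have h2 : (0:ℝ) < (1 - |r|)^2 := pow_pos (by linarith) 2
  have h3 : |r|^2 = r^2 := sq_abs r
  nlinarith

lemma abs_sq_aux (r θ : ℝ) :
    ‖1 - (r:ℂ) * Complex.exp (θ*Complex.I)‖ ^ 2 = 1 - 2*r*Real.cos θ + r^2 := by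
  rw [Complex.sq_norm, Complex.normSq_apply]
  simp [Complex.exp_ofReal_mul_I_re, Complex.exp_ofReal_mul_I_im, Complex.sub_re, Complex.sub_im,
    Complex.mul_re, Complex.mul_im]
  nlinarith [Real.sin_sq_add_cos_sq θ]

lemma contM (r : ℝ) : Continuous (fun θ : ℝ => 1 - 2*r*Real.cos θ + r^2) := by
  continuity

lemma contlogM (r : ℝ) (hr : |r| < 1) :
    Continuous (fun θ : ℝ => Real.log (1 - 2*r*Real.cos θ + r^2)) :=
  (contM r).log (fun θ => (Mpos r hr θ).ne')

lemma log_integral_two_pi (r : ℝ) (hr : |r| < 1) :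
    ∫ θ in (0:ℝ)..(2*π), Real.log (1 - 2*r*Real.cos θ + r^2) = 0 := by
  have hc : Continuous (fun θ : ℝ => Complex.log (1 - (r:ℂ) * Complex.exp (θ*Complex.I))) := by
    apply Continuous.clog
    · continuity
    · intro θ
      apply slit_aux r hr
      simp [Complex.norm_exp_ofReal_mul_I]
  have hkey := cauchy_aux r hr
  have h2pi : (0:ℝ) ≤ 2*π := by positivity
  rw [intervalIntegral.integral_of_le h2pi] at hkey
  have hint : IntegrableOn (fun θ : ℝ => Complex.log (1 - (r:ℂ) * Complex.exp (θ*Complex.I)))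
      (Ioc 0 (2*π)) volume := hc.integrableOn_Ioc
  have hre := congrArg Complex.re hkey
  rw [← RCLike.re_eq_complex_re, ← integral_re hint, RCLike.re_eq_complex_re] at hre
  simp only [Complex.zero_re] at hre
  have hpt : ∀ θ : ℝ, (Complex.log (1 - (r:ℂ) * Complex.exp (θ*Complex.I))).re
      = Real.log (1 - 2*r*Real.cos θ + r^2) / 2 := by
    intro θ
    rw [Complex.log_re, ← abs_sq_aux r θ, Real.log_pow]
    ring
  rw [intervalIntegral.integral_of_le h2pi]
  have : ∫ θ in Ioc (0:ℝ) (2*π), Real.log (1 - 2*r*Real.cos θ + r^2) / 2 = 0 := by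
    rw [setIntegral_congr_fun measurableSet_Ioc (fun θ (_ : θ ∈ Ioc (0:ℝ) (2*π)) => (hpt θ).symm)]
    exact hre
  have h2 := this
  rw [MeasureTheory.integral_div] at h2
  linarith [h2]

lemma log_integral_pi (r : ℝ) (hr : |r| < 1) :
    ∫ θ in (0:ℝ)..π, Real.log (1 - 2*r*Real.cos θ + r^2) = 0 := by
  set g : ℝ → ℝ := fun θ => Real.log (1 - 2*r*Real.cos θ + r^2) with hg
  have hint : ∀ a b : ℝ, IntervalIntegrable g volume a b :=
    fun a b => (contlogM r hr).intervalIntegrable a b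
  have hsplit : (∫ θ in (0:ℝ)..π, g θ) + (∫ θ in π..(2*π), g θ)
      = ∫ θ in (0:ℝ)..(2*π), g θ :=
    intervalIntegral.integral_add_adjacent_intervals (hint 0 π) (hint π (2*π))
  have hrefl : (∫ θ in π..(2*π), g θ) = ∫ θ in (0:ℝ)..π, g θ := by
    have := intervalIntegral.integral_comp_sub_left (a := 0) (b := π) g (2*π)
    rw [show 2*π - π = π by ring, show 2*π - 0 = 2*π by ring] at this
    rw [← this]
    apply intervalIntegral.integral_congr
    intro θ _
    simp only [hg]
    rw [Real.cos_sub]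
    simp [Real.cos_two_pi, Real.sin_two_pi]
  rw [log_integral_two_pi r hr, hrefl] at hsplit
  linarith

end ArcsineAux

open Real MeasureTheory intervalIntegral Metric Set in
/-- For `z < 0`, the logarithmic potential of the arcsine distribution on `[0,4]` is
`U(z) = ∫_0^4 log(x-z)/(π√(x(4-x))) dx = 2 log((√(-z)+√(4-z))/2)`. -/
theorem arcsine_potential_formula (z : ℝ) (hz : z < 0) :
    ∫ x in (0:ℝ)..4, Real.log (x - z) / (π * Real.sqrt (x * (4 - x)))
      = 2 * Real.log ((Real.sqrt (-z) + Real.sqrt (4 - z)) / 2) := by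
  set s := Real.sqrt (-z) with hsdef
  set t := Real.sqrt (4 - z) with htdef
  have hs0 : 0 < s := Real.sqrt_pos.mpr (by linarith)
  have ht0 : 0 < t := Real.sqrt_pos.mpr (by linarith)
  have hs2 : s^2 = -z := Real.sq_sqrt (by linarith)
  have ht2 : t^2 = 4 - z := Real.sq_sqrt (by linarith)
  have hst : s < t := by
    nlinarith
  set c := (s + t) / 2 with hcdef
  set r := (t - s) / (t + s) with hrdef
  have hc0 : 0 < c := by positivity
  have hr0 : 0 < r := by apply div_pos <;> linarith
  have hr1 : r < 1 := by rw [div_lt_one (by linarith)]; linarith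
  have hrabs : |r| < 1 := by rw [abs_of_pos hr0]; exact hr1
  have h1 : c^2 * r = 1 := by
    rw [hcdef, hrdef]
    field_simp
    nlinarith
  have h2 : c^2 * (1 + r^2) = 2 - z := by
    rw [hcdef, hrdef]
    field_simp
    nlinarith
  have hpoint : ∀ θ : ℝ, (2 - z) - 2*Real.cos θ = c^2 * (1 - 2*r*Real.cos θ + r^2) := by
    intro θ
    have : c^2 * (1 - 2*r*Real.cos θ + r^2) = c^2*(1+r^2) - 2*(c^2*r)*Real.cos θ := by ring
    rw [this, h1, h2]; ring
  -- substitution x = 2 - 2 cos θ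
  set φ : ℝ → ℝ := fun θ => 2 - 2*Real.cos θ with hφdef
  have hmono : StrictMonoOn φ (Icc 0 π) := by
    intro a ha b hb hab
    have := Real.strictAntiOn_cos ha hb hab
    simp only [hφdef]
    linarith
  have hinj : InjOn φ (Ioo 0 π) := (hmono.injOn).mono Ioo_subset_Icc_self
  have hderiv : ∀ x ∈ Ioo (0:ℝ) π, HasDerivWithinAt φ (2*Real.sin x) (Ioo 0 π) x := by
    intro x _
    have h : HasDerivAt (fun y => (2:ℝ) - 2 * Real.cos y) (0 - 2 * -Real.sin x) x :=
      (hasDerivAt_const x (2:ℝ)).sub ((Real.hasDerivAt_cos x).const_mul 2)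
    have h2 : HasDerivAt φ (2*Real.sin x) x := by convert h using 1; ring
    exact h2.hasDerivWithinAt
  have himg : φ '' (Ioo 0 π) = Ioo 0 4 := by
    ext y
    constructor
    · rintro ⟨θ, ⟨h0, hπ⟩, rfl⟩
      have hc1 : Real.cos θ < 1 := by
        have := Real.strictAntiOn_cos (left_mem_Icc.mpr Real.pi_pos.le)
          ⟨h0.le, hπ.le⟩ h0
        simpa using this
      have hc2 : -1 < Real.cos θ := by
        have := Real.strictAntiOn_cos ⟨h0.le, hπ.le⟩
          (right_mem_Icc.mpr Real.pi_pos.le) hπ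
        simpa using this
      constructor <;> simp only [hφdef] <;> linarith
    · rintro ⟨hy0, hy4⟩
      refine ⟨Real.arccos ((2 - y)/2), ⟨?_, ?_⟩, ?_⟩
      · rw [Real.arccos_pos]; linarith
      · have h' : -(π/2) < Real.arcsin ((2-y)/2) :=
          Real.neg_pi_div_two_lt_arcsin.mpr (by linarith)
        rw [Real.arccos]; linarith
      · simp only [hφdef]
        rw [Real.cos_arccos (by linarith) (by linarith)]
        ring
  set g : ℝ → ℝ := fun x => Real.log (x - z) / (π * Real.sqrt (x * (4 - x))) with hgdef
  have hsub : ∫ x in φ '' (Ioo 0 π), g x = ∫ θ in Ioo 0 π, |2*Real.sin θ| • g (φ θ) :=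
    integral_image_eq_integral_abs_deriv_smul measurableSet_Ioo hderiv hinj g
  rw [himg] at hsub
  have hLHS : (∫ x in (0:ℝ)..4, g x) = ∫ x in Ioo (0:ℝ) 4, g x := by
    rw [intervalIntegral.integral_of_le (by norm_num), integral_Ioc_eq_integral_Ioo]
  have hpt2 : ∀ θ ∈ Ioo (0:ℝ) π, |2*Real.sin θ| • g (φ θ)
      = Real.log ((2 - z) - 2*Real.cos θ) / π := by
    intro θ ⟨h0, hπ⟩
    have hsin : 0 < Real.sin θ := Real.sin_pos_of_pos_of_lt_pi h0 hπ
    have hsqrt : Real.sqrt (φ θ * (4 - φ θ)) = 2*Real.sin θ := by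
      have : φ θ * (4 - φ θ) = (2*Real.sin θ)^2 := by
        simp only [hφdef]
        nlinarith [Real.sin_sq_add_cos_sq θ]
      rw [this, Real.sqrt_sq (by linarith)]
    have hφz : φ θ - z = (2 - z) - 2*Real.cos θ := by simp only [hφdef]; ring
    rw [smul_eq_mul, hgdef]
    simp only
    rw [hsqrt, hφz, abs_of_pos (by linarith)]
    field_simp
  rw [setIntegral_congr_fun measurableSet_Ioo hpt2] at hsub
  have hback : ∫ θ in Ioo (0:ℝ) π, Real.log ((2 - z) - 2*Real.cos θ) / π
      = ∫ θ in (0:ℝ)..π, Real.log ((2 - z) - 2*Real.cos θ) / π := by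
    rw [intervalIntegral.integral_of_le Real.pi_pos.le, integral_Ioc_eq_integral_Ioo]
  have hlogsplit : ∀ θ : ℝ, Real.log ((2 - z) - 2*Real.cos θ)
      = Real.log (c^2) + Real.log (1 - 2*r*Real.cos θ + r^2) := by
    intro θ
    rw [hpoint θ]
    have hM : (0:ℝ) < 1 - 2*r*Real.cos θ + r^2 := by
      nlinarith [Real.neg_one_le_cos θ, Real.cos_le_one θ, sq_nonneg (1 - r)]
    rw [Real.log_mul (by positivity) hM.ne']
  have hfinal : ∫ θ in (0:ℝ)..π, Real.log ((2 - z) - 2*Real.cos θ) / π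
      = 2 * Real.log c := by
    rw [intervalIntegral.integral_div]
    have : ∫ θ in (0:ℝ)..π, Real.log ((2 - z) - 2*Real.cos θ)
        = ∫ θ in (0:ℝ)..π, (Real.log (c^2) + Real.log (1 - 2*r*Real.cos θ + r^2)) :=
      intervalIntegral.integral_congr (fun θ _ => hlogsplit θ)
    rw [this, intervalIntegral.integral_add intervalIntegrable_const
      ((contlogM r hrabs).intervalIntegrable 0 π), log_integral_pi r hrabs,
      intervalIntegral.integral_const]
    rw [Real.log_pow]
    field_simp [Real.pi_ne_zero]
    rw [smul_eq_mul]; push_cast; ring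
  calc ∫ x in (0:ℝ)..4, Real.log (x - z) / (π * Real.sqrt (x * (4 - x)))
      = ∫ x in Ioo (0:ℝ) 4, g x := hLHS
    _ = ∫ θ in Ioo (0:ℝ) π, Real.log ((2 - z) - 2*Real.cos θ) / π := hsub
    _ = ∫ θ in (0:ℝ)..π, Real.log ((2 - z) - 2*Real.cos θ) / π := hback
    _ = 2 * Real.log c := hfinal
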